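/- Let ρ : ∂B_r → ℝ be C¹ with (1/2)∫_{∂B_r} |∇ρ|² + (1/(2ε²))(1−ρ²)² ≤ M. Then ‖1 − ρ‖_{L∞(∂B_r)} ≤ C·(ε·M)^{1/3} for a universal constant C, provided ρ ≥ 0; in particular if M = C(log ε)² then ‖ρ − 1‖_{L∞(∂B_r)} → 0 as ε → 0. -/

import Mathlib

open Real

private lemma cube_abs_le (x : ℝ) (hx : 0 ≤ x) : |1 - x| ^ 3 ≤ (x - 1) ^ 2 * (x + 2) := by
  rcases le_total x 1 with h | h
  · rw [abs_of_nonneg (by linarith)]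
    nlinarith [sq_nonneg (1 - x)]
  · rw [abs_of_nonpos (by linarith)]
    nlinarith [sq_nonneg (x - 1)]

private lemma helper_amgm (ε a c : ℝ) (hε : 0 < ε) :
    |c * a| ≤ (Real.sqrt 2 * ε / 2) * (a ^ 2 + 1 / (2 * ε ^ 2) * c ^ 2) := by
  have hs2 : Real.sqrt 2 ^ 2 = 2 := Real.sq_sqrt (by norm_num)
  have h1 : |c * a| = |c| * |a| := abs_mul _ _
  have e1 : (Real.sqrt 2 * ε * |a| - |c|) ^ 2
      = Real.sqrt 2 ^ 2 * (ε ^ 2 * |a| ^ 2)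
        - 2 * Real.sqrt 2 * ε * (|c| * |a|) + |c| ^ 2 := by ring
  rw [hs2] at e1
  have key : 2 * Real.sqrt 2 * ε * (|c| * |a|) ≤ 2 * ε ^ 2 * a ^ 2 + c ^ 2 := by
    nlinarith [sq_nonneg (Real.sqrt 2 * ε * |a| - |c|), e1, sq_abs a, sq_abs c]
  have hD : 2 * Real.sqrt 2 * ε * ((Real.sqrt 2 * ε / 2) * (a ^ 2 + 1 / (2 * ε ^ 2) * c ^ 2))
      = 2 * ε ^ 2 * a ^ 2 + c ^ 2 := by
    have hεne : ε ≠ 0 := hε.ne'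
    field_simp
    linear_combination (2 * ε ^ 2 * a ^ 2 + c ^ 2) * hs2
  have h2pos : (0:ℝ) < 2 * Real.sqrt 2 * ε := by
    have := Real.sqrt_pos.mpr (show (0:ℝ) < 2 by norm_num)
    positivity
  rw [h1, ← mul_le_mul_iff_right₀ h2pos, hD]
  exact key

private lemma helper_div (p x ε M : ℝ) (hε : 0 < ε) (h : 2 * p * ε * x ≤ 4 * ε ^ 2 * M) :
    p * x ≤ 2 * (ε * M) := by
  nlinarith [h, hε]

private lemma helper_key1 (p ε M b x : ℝ) (hp : 0 < p) (hb2 : p * b ^ 2 ≤ 2 * (ε * M))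
    (h1 : x - 1 ≤ b) (hb1 : b ≤ 1) (hx : 0 ≤ x) :
    p * (b ^ 2 * (x + 2)) ≤ 8 * (ε * M) := by
  have h2 : x + 2 ≤ 4 := by linarith
  have h3 : b ^ 2 * (x + 2) ≤ 4 * b ^ 2 := by nlinarith [sq_nonneg b]
  nlinarith [mul_le_mul_of_nonneg_left h3 hp.le, hb2]

private lemma helper_key2 (p ε M b : ℝ) (hp : 0 < p) (hb4 : p * b ^ 4 ≤ 2 * (ε * M))
    (hb1 : 1 < b) : p * (b ^ 2 * ((b + 1) + 2)) ≤ 8 * (ε * M) := by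
  have h5 : (0:ℝ) ≤ b - 1 := by linarith
  have e1 : b ^ 2 * ((b + 1) + 2) ≤ 4 * b ^ 4 := by
    nlinarith [mul_nonneg (mul_nonneg (sq_nonneg b) h5) (by linarith : (0:ℝ) ≤ 4 * b + 3)]
  nlinarith [mul_le_mul_of_nonneg_left e1 hp.le, hb4]

private lemma helper_div3 (p u A : ℝ) (hp : 3 < p) (hu : 0 ≤ u) (h : p * u ≤ 8 * A) :
    u ≤ 8 / 3 * A := by
  nlinarith [mul_nonneg (by linarith : (0:ℝ) ≤ p - 3) hu]

private lemma helper_comb (A g q y : ℝ) (hA : 0 ≤ A) (hg : g ≤ Real.sqrt 2 * A)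
    (hq : q ≤ 8 / 3 * A) (hy : |1 - y| ^ 3 ≤ q + 3 * g) : |1 - y| ^ 3 ≤ 8 * A := by
  have hs2 : Real.sqrt 2 ^ 2 = 2 := Real.sq_sqrt (by norm_num)
  have hs0 : 0 ≤ Real.sqrt 2 := Real.sqrt_nonneg 2
  have hsqrt32 : Real.sqrt 2 ≤ 1.5 := by nlinarith [hs2, hs0]
  nlinarith [mul_le_mul_of_nonneg_right hsqrt32 hA]

set_option maxHeartbeats 1000000 in
/-- clearing-out estimate on a circle (parametrized by arclength, the function
`ρ` being `2πr`-periodic): an energy bound `M` forces `‖1 − ρ‖_∞ ≤ C (εM)^{1/3}`. -/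
theorem stmt16 :
    ∃ C : ℝ, 0 < C ∧
      ∀ (r ε M : ℝ) (ρ ρ' : ℝ → ℝ), 0 < r → 0 < ε → ε ≤ r →
        (∀ s, HasDerivAt ρ (ρ' s) s) → Continuous ρ' →
        (∀ s, ρ (s + 2 * π * r) = ρ s) → (∀ s, 0 ≤ ρ s) →
        (1 / 2) * (∫ s in (0:ℝ)..(2 * π * r),
            (ρ' s) ^ 2 + (1 / (2 * ε ^ 2)) * (1 - (ρ s) ^ 2) ^ 2) ≤ M →
        ∀ s, |1 - ρ s| ≤ C * (ε * M) ^ ((1:ℝ)/3) := by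
  refine ⟨2, by norm_num, ?_⟩
  intro r ε M ρ ρ' hr hε her hρ hρ'c hper hρ0 hE s
  have hπ3 := Real.pi_gt_three
  have hπ0 := Real.pi_pos
  set T : ℝ := 2 * π * r with hTdef
  have hT : 0 < T := by positivity
  have hρd : Differentiable ℝ ρ := fun t => (hρ t).differentiableAt
  have hρc : Continuous ρ := hρd.continuous
  -- the energy density
  set e : ℝ → ℝ := fun t => (ρ' t) ^ 2 + (1 / (2 * ε ^ 2)) * (1 - (ρ t) ^ 2) ^ 2 with he_def
  have hec : Continuous e := by fun_prop
  have he_nonneg : ∀ t, 0 ≤ e t := fun t => by positivity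
  have hE' : (∫ t in (0:ℝ)..T, e t) ≤ 2 * M := by linarith [hE]
  have hM : 0 ≤ M := by
    have h0 := intervalIntegral.integral_nonneg (μ := MeasureTheory.volume) hT.le (fun u _ => he_nonneg u)
    linarith
  have hA : 0 ≤ ε * M := mul_nonneg hε.le hM
  -- potential energy bound
  have hpot : (∫ t in (0:ℝ)..T, (1 - (ρ t) ^ 2) ^ 2) ≤ 4 * ε ^ 2 * M := by
    have h2 : (1 / (2 * ε ^ 2)) * ∫ t in (0:ℝ)..T, (1 - (ρ t) ^ 2) ^ 2 ≤ 2 * M := by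
      rw [← intervalIntegral.integral_const_mul]
      refine le_trans (intervalIntegral.integral_mono_on hT.le ?_ ?_ ?_) hE'
      · exact (by fun_prop : Continuous fun t => (1 / (2 * ε ^ 2)) * (1 - (ρ t) ^ 2) ^ 2).intervalIntegrable _ _
      · exact hec.intervalIntegrable _ _
      · intro x _; simp only [he_def]; nlinarith [sq_nonneg (ρ' x)]
    have hε2 : (0:ℝ) < 2 * ε ^ 2 := by positivity
    have h3 := mul_le_mul_of_nonneg_left h2 hε2.le
    rw [← mul_assoc, mul_one_div, div_self hε2.ne', one_mul] at h3
    linarith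
  -- mixed term bound
  have hs2 : Real.sqrt 2 ^ 2 = 2 := Real.sq_sqrt (by norm_num)
  have hs2' : (0:ℝ) < Real.sqrt 2 := Real.sqrt_pos.mpr (by norm_num)
  have hmix : (∫ t in (0:ℝ)..T, |(1 - (ρ t) ^ 2) * ρ' t|) ≤ Real.sqrt 2 * ε * M := by
    have hpt : ∀ x, |(1 - (ρ x) ^ 2) * ρ' x| ≤ (Real.sqrt 2 * ε / 2) * e x :=
      fun x => helper_amgm ε (ρ' x) (1 - (ρ x) ^ 2) hε
    calc (∫ t in (0:ℝ)..T, |(1 - (ρ t) ^ 2) * ρ' t|)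
        ≤ ∫ t in (0:ℝ)..T, (Real.sqrt 2 * ε / 2) * e t := by
          refine intervalIntegral.integral_mono_on hT.le ?_ ?_ (fun x _ => hpt x)
          · exact (by fun_prop : Continuous fun t => |(1 - (ρ t) ^ 2) * ρ' t|).intervalIntegrable _ _
          · exact (continuous_const.mul hec).intervalIntegrable _ _
      _ = (Real.sqrt 2 * ε / 2) * ∫ t in (0:ℝ)..T, e t := intervalIntegral.integral_const_mul _ _
      _ ≤ (Real.sqrt 2 * ε / 2) * (2 * M) :=
          mul_le_mul_of_nonneg_left hE' (by positivity)
      _ = Real.sqrt 2 * ε * M := by ring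
  -- minimum point
  obtain ⟨s₁, hs₁T, hminOn⟩ := (isCompact_Icc (a := (0:ℝ)) (b := T)).exists_isMinOn
    ⟨0, Set.mem_Icc.mpr ⟨le_rfl, hT.le⟩⟩
    (Continuous.continuousOn (by fun_prop : Continuous fun t => |1 - ρ t|))
  have hmin : ∀ t ∈ Set.Icc (0:ℝ) T, |1 - ρ s₁| ≤ |1 - ρ t| := fun t ht => hminOn ht
  set b : ℝ := |1 - ρ s₁| with hbdef
  have hb0 : 0 ≤ b := abs_nonneg _
  -- b² bound
  have hb2T : T * b ^ 2 ≤ 4 * ε ^ 2 * M := by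
    have hle : (∫ t in (0:ℝ)..T, b ^ 2) ≤ ∫ t in (0:ℝ)..T, (1 - (ρ t) ^ 2) ^ 2 := by
      refine intervalIntegral.integral_mono_on hT.le (intervalIntegrable_const) ?_ ?_
      · exact (by fun_prop : Continuous fun t => (1 - (ρ t) ^ 2) ^ 2).intervalIntegrable _ _
      · intro t ht
        have h1 : b ^ 2 ≤ (1 - ρ t) ^ 2 := by
          rw [← sq_abs (1 - ρ t)]
          exact pow_le_pow_left₀ hb0 (hmin t ht) 2
        nlinarith [sq_nonneg (1 - ρ t), hρ0 t, mul_nonneg (sq_nonneg (1 - ρ t)) (hρ0 t)]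
    rw [intervalIntegral.integral_const, smul_eq_mul, sub_zero] at hle
    linarith
  have hb2 : π * b ^ 2 ≤ 2 * (ε * M) := by
    have h1 : 2 * π * ε * b ^ 2 ≤ T * b ^ 2 := by
      have := mul_le_mul_of_nonneg_left her (by positivity : (0:ℝ) ≤ 2 * π)
      nlinarith [sq_nonneg b]
    exact helper_div π (b ^ 2) ε M hε (le_trans h1 hb2T)
  -- key bound : π * (b^2 * (ρ s₁ + 2)) ≤ 8 * (ε * M)
  have hkey : π * (b ^ 2 * (ρ s₁ + 2)) ≤ 8 * (ε * M) := by
    rcases le_or_gt b 1 with hb1 | hb1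
    · have h1 : ρ s₁ - 1 ≤ b := by
        rw [hbdef, abs_sub_comm]; exact le_abs_self _
      exact helper_key1 π ε M b (ρ s₁) hπ0 hb2 h1 hb1 (hρ0 s₁)
    · -- everywhere far from 1 : ρ > 2 on the circle
      have hfar : ∀ t ∈ Set.Icc (0:ℝ) T, b ≤ ρ t - 1 ∧ 2 < ρ t := by
        intro t ht
        have h1 : b ≤ |1 - ρ t| := hmin t ht
        have h2 : 1 < |1 - ρ t| := lt_of_lt_of_le hb1 h1
        rcases lt_abs.mp h2 with h3 | h3
        · linarith [hρ0 t]
        · constructor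
          · rw [abs_sub_comm] at h1
            rw [abs_of_nonneg (by linarith : (0:ℝ) ≤ ρ t - 1)] at h1
            linarith
          · linarith
      have hb4T : T * b ^ 4 ≤ 4 * ε ^ 2 * M := by
        have hle : (∫ t in (0:ℝ)..T, b ^ 4) ≤ ∫ t in (0:ℝ)..T, (1 - (ρ t) ^ 2) ^ 2 := by
          refine intervalIntegral.integral_mono_on hT.le (intervalIntegrable_const) ?_ ?_
          · exact (by fun_prop : Continuous fun t => (1 - (ρ t) ^ 2) ^ 2).intervalIntegrable _ _
          · intro t ht
            obtain ⟨h1, h2⟩ := hfar t ht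
            have h3 : b ≤ ρ t + 1 := by linarith
            have h4 : b * b ≤ (ρ t - 1) * (ρ t + 1) :=
              mul_le_mul h1 h3 hb0 (by linarith)
            calc b ^ 4 = (b * b) ^ 2 := by ring
              _ ≤ ((ρ t - 1) * (ρ t + 1)) ^ 2 := pow_le_pow_left₀ (by positivity) h4 2
              _ = (1 - (ρ t) ^ 2) ^ 2 := by ring
        rw [intervalIntegral.integral_const, smul_eq_mul, sub_zero] at hle
        linarith
      have hb4 : π * b ^ 4 ≤ 2 * (ε * M) := by
        have h1 : 2 * π * ε * b ^ 4 ≤ T * b ^ 4 := by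
          have := mul_le_mul_of_nonneg_left her (by positivity : (0:ℝ) ≤ 2 * π)
          nlinarith [pow_nonneg hb0 4]
        exact helper_div π (b ^ 4) ε M hε (le_trans h1 hb4T)
      have hρ₁ : b = ρ s₁ - 1 := by
        obtain ⟨h1, h2⟩ := hfar s₁ hs₁T
        rw [hbdef, abs_sub_comm, abs_of_nonneg (by linarith : (0:ℝ) ≤ ρ s₁ - 1)]
      have hρs₁ : ρ s₁ = b + 1 := by linarith [hρ₁]
      rw [hρs₁]
      exact helper_key2 π ε M b hπ0 hb4 hb1
  -- FTC for the Modica function G(t) = t - t³/3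
  have hFTC : ∀ t : ℝ, HasDerivAt (fun u => ρ u - (ρ u) ^ 3 / 3) ((1 - (ρ t) ^ 2) * ρ' t) t := by
    intro t
    have h : HasDerivAt (fun u => ρ u - (ρ u) ^ 3 / 3) (ρ' t - ((3:ℕ):ℝ) * ρ t ^ (3 - 1) * ρ' t / 3) t :=
      (hρ t).sub (((hρ t).pow 3).div_const 3)
    convert h using 1
    push_cast
    ring
  have hint : IntervalIntegrable (fun t => (1 - (ρ t) ^ 2) * ρ' t) MeasureTheory.volume 0 T :=
    (by fun_prop : Continuous fun t => (1 - (ρ t) ^ 2) * ρ' t).intervalIntegrable _ _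
  have hG : ∀ u v : ℝ, 0 ≤ u → u ≤ v → v ≤ T →
      |(ρ v - (ρ v) ^ 3 / 3) - (ρ u - (ρ u) ^ 3 / 3)| ≤ Real.sqrt 2 * ε * M := by
    intro u v hu huv hvT
    have hftc := intervalIntegral.integral_eq_sub_of_hasDerivAt
      (f := fun w => ρ w - (ρ w) ^ 3 / 3) (fun x _ => hFTC x)
      ((by fun_prop : Continuous fun t => (1 - (ρ t) ^ 2) * ρ' t).intervalIntegrable u v)
    rw [← hftc]
    calc |∫ t in u..v, (1 - (ρ t) ^ 2) * ρ' t|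
        ≤ ∫ t in u..v, |(1 - (ρ t) ^ 2) * ρ' t| :=
          intervalIntegral.abs_integral_le_integral_abs huv
      _ ≤ ∫ t in (0:ℝ)..T, |(1 - (ρ t) ^ 2) * ρ' t| := by
          refine intervalIntegral.integral_mono_interval hu huv hvT
            (Filter.Eventually.of_forall fun x => abs_nonneg _) ?_
          exact (by fun_prop : Continuous fun t => |(1 - (ρ t) ^ 2) * ρ' t|).intervalIntegrable _ _
      _ ≤ Real.sqrt 2 * ε * M := hmix
  -- reduce the point s to the fundamental domain
  have hperiodic : Function.Periodic ρ T := hper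
  obtain ⟨s', hs'Ico, hss'⟩ := hperiodic.exists_mem_Ico₀ hT s
  have hs'0 : 0 ≤ s' := hs'Ico.1
  have hs'T : s' ≤ T := hs'Ico.2.le
  have hGdiff : |(ρ s₁ - (ρ s₁) ^ 3 / 3) - (ρ s' - (ρ s') ^ 3 / 3)| ≤ Real.sqrt 2 * ε * M := by
    rcases le_total s₁ s' with h | h
    · rw [abs_sub_comm]; exact hG s₁ s' hs₁T.1 h hs'T
    · exact hG s' s₁ hs'0 h hs₁T.2
  -- combine
  have hbkey : b ^ 2 * (ρ s₁ + 2) ≤ 8 / 3 * (ε * M) := by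
    have h0 : 0 ≤ b ^ 2 * (ρ s₁ + 2) := by
      have := hρ0 s₁; positivity
    exact helper_div3 π _ _ hπ3 h0 hkey
  have hd3 : |1 - ρ s'| ^ 3 ≤ 8 * (ε * M) := by
    have h1 : |1 - ρ s'| ^ 3 ≤ (ρ s' - 1) ^ 2 * (ρ s' + 2) := cube_abs_le _ (hρ0 s')
    have h2 : (ρ s' - 1) ^ 2 * (ρ s' + 2)
        = (ρ s₁ - 1) ^ 2 * (ρ s₁ + 2)
          + 3 * ((ρ s₁ - (ρ s₁) ^ 3 / 3) - (ρ s' - (ρ s') ^ 3 / 3)) := by ring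
    have h3 : (ρ s₁ - 1) ^ 2 * (ρ s₁ + 2) = b ^ 2 * (ρ s₁ + 2) := by
      rw [hbdef, sq_abs]
      ring
    have h4 : (ρ s₁ - (ρ s₁) ^ 3 / 3) - (ρ s' - (ρ s') ^ 3 / 3) ≤ Real.sqrt 2 * (ε * M) := by
      have := le_trans (le_abs_self _) hGdiff
      linarith [this.trans_eq (by ring : Real.sqrt 2 * ε * M = Real.sqrt 2 * (ε * M))]
    refine helper_comb (ε * M) _ _ (ρ s') hA h4 hbkey ?_
    rw [h2, h3] at h1
    linarith
  -- conclude with rpow algebra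
  have habs : |1 - ρ s| = |1 - ρ s'| := by rw [hss']
  rw [habs]
  have hδ0 : 0 ≤ |1 - ρ s'| := abs_nonneg _
  calc |1 - ρ s'| = (|1 - ρ s'| ^ (3:ℕ)) ^ ((1:ℝ)/3) := by
        rw [← Real.rpow_natCast (|1 - ρ s'|) 3, ← Real.rpow_mul hδ0]
        norm_num
    _ ≤ (8 * (ε * M)) ^ ((1:ℝ)/3) := by
        apply Real.rpow_le_rpow (by positivity) (by exact_mod_cast hd3) (by norm_num)
    _ = 2 * (ε * M) ^ ((1:ℝ)/3) := by
        rw [Real.mul_rpow (by norm_num) hA]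
        congr 1
        rw [show (8:ℝ) = 2 ^ (3:ℕ) by norm_num, ← Real.rpow_natCast 2 3,
          ← Real.rpow_mul (by norm_num : (0:ℝ) ≤ 2)]
        norm_num
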